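/- The propensity score balancing property: if e(X) = P(D=1|X) then D ⟂ X | e(X), i.e., P(D=1 | X, e(X)) = P(D=1 | e(X)) = e(X) almost surely. -/

import Mathlib

open MeasureTheory ProbabilityTheory


private lemma indicator_one_integrable {Ω : Type*} {mΩ : MeasurableSpace Ω}
    (μ : MeasureTheory.Measure Ω) [MeasureTheory.IsFiniteMeasure μ] {s : Set Ω}
    (hs : MeasurableSet s) :
    MeasureTheory.Integrable (s.indicator fun _ => (1 : ℝ)) μ :=
  (MeasureTheory.integrable_const 1).indicator hs

/-- the propensity-score balancing property. If `e(X) = E[D | X]`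
(the propensity score of the `{0,1}`-valued treatment `D`), then `D ⟂ X | e(X)`
and `P(D = 1 | e(X)) = e(X)` a.s., i.e. `E[D | σ(e(X))] = e(X)` a.s. -/
theorem propensity_score_balancing
    {Ω S : Type*} {mΩ : MeasurableSpace Ω} [StandardBorelSpace Ω] [Nonempty Ω]
    [MeasurableSpace S] (μ : Measure Ω) [IsProbabilityMeasure μ]
    (X : Ω → S) (D : Ω → ℝ) (e : S → ℝ)
    (hX : Measurable X) (hD : Measurable D) (he_meas : Measurable e)
    (hD01 : ∀ ω, D ω = 0 ∨ D ω = 1)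
    (hmX : MeasurableSpace.comap X inferInstance ≤ mΩ)
    (hmeX : MeasurableSpace.comap (fun ω => e (X ω)) inferInstance ≤ mΩ)
    -- e(X) is a version of E[D | σ(X)]
    (he : (fun ω => e (X ω)) =ᵐ[μ] μ[D | MeasurableSpace.comap X inferInstance]) :
    CondIndepFun (MeasurableSpace.comap (fun ω => e (X ω)) inferInstance) hmeX D X μ ∧
      μ[D | MeasurableSpace.comap (fun ω => e (X ω)) inferInstance]
        =ᵐ[μ] fun ω => e (X ω) := by
  have hone : Integrable (fun _ : Ω => (1 : ℝ)) μ := integrable_const 1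
  set mE := MeasurableSpace.comap (fun ω => e (X ω)) inferInstance with hmE_def
  set mX := MeasurableSpace.comap X inferInstance with hmX_def
  -- mE ≤ mX
  have hle : mE ≤ mX := by
    rw [hmE_def, hmX_def]
    have : MeasurableSpace.comap (fun ω => e (X ω)) (inferInstance : MeasurableSpace ℝ)
        = MeasurableSpace.comap X (MeasurableSpace.comap e inferInstance) := by
      rw [MeasurableSpace.comap_comp]; rfl
    rw [this]
    exact MeasurableSpace.comap_mono (Measurable.comap_le he_meas)
  -- measurability of e ∘ X w.r.t. mE
  have heX_meas : Measurable[mE] fun ω => e (X ω) := Measurable.of_comap_le le_rfl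
  have heX_sm : StronglyMeasurable[mE] fun ω => e (X ω) := heX_meas.stronglyMeasurable
  -- integrability facts
  have hDint : Integrable D μ := by
    refine hone.mono' hD.aestronglyMeasurable ?_
    refine Filter.Eventually.of_forall fun ω => ?_
    rcases hD01 ω with h | h <;> simp [h]
  have heXint : Integrable (fun ω => e (X ω)) μ :=
    (integrable_condExp (m := mX)).congr he.symm
  -- Part 2: μ[D | mE] =ᵐ e ∘ X
  have part2 : μ[D | mE] =ᵐ[μ] fun ω => e (X ω) := by
    calc μ[D | mE] =ᵐ[μ] μ[μ[D | mX] | mE] := (condExp_condExp_of_le hle hmX).symm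
      _ =ᵐ[μ] μ[(fun ω => e (X ω)) | mE] := condExp_congr_ae he.symm
      _ = fun ω => e (X ω) := condExp_of_stronglyMeasurable hmeX heX_sm heXint
  refine ⟨?_, part2⟩
  have hD1meas : MeasurableSet[mΩ] {ω | D ω = 1} := hD (measurableSet_singleton 1)
  -- key lemma: for measurable t, μ⟦{D = 1} ∩ X ⁻¹' t | mE⟧ =ᵐ (e ∘ X) * μ⟦X ⁻¹' t | mE⟧
  have key : ∀ t : Set S, MeasurableSet t →
      (μ⟦{ω | D ω = 1} ∩ X ⁻¹' t | mE⟧)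
        =ᵐ[μ] fun ω => e (X ω) * (μ⟦X ⁻¹' t | mE⟧) ω := by
    intro t ht
    set A : Set Ω := X ⁻¹' t with hA_def
    have hA_mX : MeasurableSet[mX] A := ⟨t, ht, rfl⟩
    have hA_meas : MeasurableSet[mΩ] A := hX ht
    have hfun : (fun ω => (A.indicator fun _ => (1 : ℝ)) ω * D ω)
        = (A.indicator fun _ => (1 : ℝ)) * D := rfl
    have hfun2 : (fun ω => e (X ω) * (A.indicator fun _ => (1 : ℝ)) ω)
        = (fun ω => e (X ω)) * (A.indicator fun _ => (1 : ℝ)) := rfl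
    have hIA_sm : StronglyMeasurable[mX] (A.indicator fun _ => (1 : ℝ)) :=
      (stronglyMeasurable_const (β := ℝ)).indicator hA_mX
    have hIA_int : Integrable (A.indicator fun _ => (1 : ℝ)) μ :=
      indicator_one_integrable μ hA_meas
    -- indicator of {D = 1} ∩ A is (1_A) * D
    have hind : Set.indicator ({ω | D ω = 1} ∩ A) (fun _ => (1 : ℝ))
        = fun ω => (A.indicator fun _ => (1 : ℝ)) ω * D ω := by
      funext ω
      by_cases hA : ω ∈ A <;> rcases hD01 ω with h | h <;>
        simp [Set.indicator_apply, hA, h]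
    have hprod_int : Integrable (fun ω => (A.indicator fun _ => (1 : ℝ)) ω * D ω) μ := by
      rw [← hind]
      exact indicator_one_integrable μ (hD1meas.inter hA_meas)
    -- pull-out at level mX
    have step1 : μ[(fun ω => (A.indicator fun _ => (1 : ℝ)) ω * D ω) | mX]
        =ᵐ[μ] fun ω => (A.indicator fun _ => (1 : ℝ)) ω * e (X ω) := by
      rw [hfun]
      have h := condExp_mul_of_stronglyMeasurable_left hIA_sm (hfun ▸ hprod_int) hDint
      filter_upwards [h, he] with ω h1 h2
      simp only [Pi.mul_apply] at h1
      rw [h1, ← h2]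
    -- tower
    have step2 : (μ⟦{ω | D ω = 1} ∩ A | mE⟧)
        =ᵐ[μ] μ[(fun ω => e (X ω) * (A.indicator fun _ => (1 : ℝ)) ω) | mE] := by
      rw [hind]
      calc μ[(fun ω => (A.indicator fun _ => (1 : ℝ)) ω * D ω) | mE]
          =ᵐ[μ] μ[μ[(fun ω => (A.indicator fun _ => (1 : ℝ)) ω * D ω) | mX] | mE] :=
            (condExp_condExp_of_le hle hmX).symm
        _ =ᵐ[μ] μ[(fun ω => (A.indicator fun _ => (1 : ℝ)) ω * e (X ω)) | mE] :=
            condExp_congr_ae step1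
        _ =ᵐ[μ] μ[(fun ω => e (X ω) * (A.indicator fun _ => (1 : ℝ)) ω) | mE] :=
            condExp_congr_ae (Filter.Eventually.of_forall fun ω => mul_comm _ _)
    -- pull-out at level mE
    have hmul_int : Integrable (fun ω => e (X ω) * (A.indicator fun _ => (1 : ℝ)) ω) μ := by
      have h : Integrable (fun ω => (A.indicator fun _ => (1 : ℝ)) ω * e (X ω)) μ := by
        refine heXint.bdd_mul (c := 1) hIA_int.aestronglyMeasurable (Filter.Eventually.of_forall fun ω => ?_)
        by_cases hA : ω ∈ A <;> simp [Set.indicator_apply, hA]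
      exact h.congr (Filter.Eventually.of_forall fun ω => mul_comm _ _)
    have step3 : μ[(fun ω => e (X ω) * (A.indicator fun _ => (1 : ℝ)) ω) | mE]
        =ᵐ[μ] fun ω => e (X ω) * (μ⟦A | mE⟧) ω := by
      rw [hfun2]
      have h := condExp_mul_of_stronglyMeasurable_left heX_sm (hfun2 ▸ hmul_int) hIA_int
      filter_upwards [h] with ω h1
      simpa using h1
    exact step2.trans step3
  -- μ⟦{D = 1} | mE⟧ =ᵐ e ∘ X
  have hD_ind : Set.indicator {ω | D ω = 1} (fun _ => (1 : ℝ)) = D := by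
    funext ω
    rcases hD01 ω with h | h <;> simp [Set.indicator_apply, h]
  have both : (μ⟦{ω | D ω = 1} | mE⟧) =ᵐ[μ] fun ω => e (X ω) := by
    rw [hD_ind]; exact part2
  -- now prove conditional independence
  rw [condIndepFun_iff_condExp_inter_preimage_eq_mul hD hX]
  intro s t hs ht
  by_cases h1 : (1 : ℝ) ∈ s <;> by_cases h0 : (0 : ℝ) ∈ s
  · -- both 0 and 1 in s : D ⁻¹' s = univ
    have hB : D ⁻¹' s = Set.univ := by
      ext ω; simp only [Set.mem_preimage, Set.mem_univ, iff_true]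
      rcases hD01 ω with h | h <;> rw [h] <;> assumption
    rw [hB, Set.univ_inter]
    have huniv : (μ⟦(Set.univ : Set Ω) | mE⟧) = fun _ => (1 : ℝ) := by
      rw [Set.indicator_univ]
      exact condExp_const hmeX (1 : ℝ)
    rw [huniv]
    filter_upwards with ω
    simp
  · -- 1 ∈ s, 0 ∉ s : D ⁻¹' s = {D = 1}
    have hB : D ⁻¹' s = {ω | D ω = 1} := by
      ext ω; simp only [Set.mem_preimage, Set.mem_setOf_eq]
      rcases hD01 ω with h | h <;> rw [h] <;> simp [h0, h1]
    rw [hB]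
    filter_upwards [key t ht, both] with ω h1' h2'
    rw [h1', h2']
  · -- 0 ∈ s, 1 ∉ s : D ⁻¹' s = {D = 0} = complement of {D = 1}
    have hB : D ⁻¹' s = {ω | D ω = 1}ᶜ := by
      ext ω; simp only [Set.mem_preimage, Set.mem_compl_iff, Set.mem_setOf_eq]
      rcases hD01 ω with h | h <;> rw [h] <;> simp [h0, h1]
    rw [hB]
    have hA_meas : MeasurableSet[mΩ] (X ⁻¹' t) := hX ht
    have hIA_int : Integrable ((X ⁻¹' t).indicator fun _ => (1 : ℝ)) μ :=
      indicator_one_integrable μ hA_meas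
    have hI1A_int : Integrable (({ω | D ω = 1} ∩ X ⁻¹' t).indicator fun _ => (1 : ℝ)) μ :=
      indicator_one_integrable μ (hD1meas.inter hA_meas)
    -- indicator of complement-intersection as difference
    have hdiff : Set.indicator ({ω | D ω = 1}ᶜ ∩ X ⁻¹' t) (fun _ => (1 : ℝ))
        = (X ⁻¹' t).indicator (fun _ => (1 : ℝ))
          - ({ω | D ω = 1} ∩ X ⁻¹' t).indicator (fun _ => (1 : ℝ)) := by
      funext ω
      by_cases hA : ω ∈ X ⁻¹' t <;> by_cases hDω : D ω = 1 <;>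
        simp [Set.indicator_apply, hA, hDω]
    have hdiffD : Set.indicator ({ω | D ω = 1}ᶜ) (fun _ => (1 : ℝ))
        = (fun _ => (1 : ℝ)) - D := by
      funext ω
      rcases hD01 ω with h | h <;> simp [Set.indicator_apply, h]
    have hBA : (μ⟦{ω | D ω = 1}ᶜ ∩ X ⁻¹' t | mE⟧)
        =ᵐ[μ] fun ω => (μ⟦X ⁻¹' t | mE⟧) ω - e (X ω) * (μ⟦X ⁻¹' t | mE⟧) ω := by
      rw [hdiff]
      have h := condExp_sub (m := mE) hIA_int hI1A_int
      filter_upwards [h, key t ht] with ω h1' h2'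
      rw [h1']
      simp only [Pi.sub_apply]
      rw [h2']
    have hBonly : (μ⟦{ω | D ω = 1}ᶜ | mE⟧) =ᵐ[μ] fun ω => 1 - e (X ω) := by
      rw [hdiffD]
      have h := condExp_sub (m := mE) hone hDint
      have hc : μ[(fun _ => (1 : ℝ)) | mE] = fun _ => (1 : ℝ) := condExp_const hmeX (1 : ℝ)
      filter_upwards [h, part2] with ω h1' h2'
      rw [h1']
      simp only [Pi.sub_apply, hc]
      rw [h2']
    filter_upwards [hBA, hBonly] with ω h1' h2'
    rw [h1', h2']
    ring
  · -- neither : D ⁻¹' s = ∅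
    have hB : D ⁻¹' s = ∅ := by
      ext ω; simp only [Set.mem_preimage, Set.mem_empty_iff_false, iff_false]
      rcases hD01 ω with h | h <;> rw [h] <;> assumption
    rw [hB, Set.empty_inter]
    have hzero : (μ⟦(∅ : Set Ω) | mE⟧) = 0 := by
      rw [Set.indicator_empty]
      exact condExp_zero
    rw [hzero]
    filter_upwards with ω
    simp
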